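/- Strict monotonicity of the jump deficiency in the wave velocity: let η > 0 and c_max < 0, let θ_s : (c_max, 0) → (0,1) be C¹ with θ_s′(c) < 0 for all c, and let Ψ : [0,1] → ℝ be continuous with Ψ ≥ 0 and Ψ(1) = 0. Suppose for each c ∈ (c_max, 0), γ_c : [θ_s(c), 1] → ℝ is continuous with γ_c(1) = 0, positive and C¹ on [θ_s(c), 1), solves γ_c(θ)·γ_c′(θ) + η·c·γ_c(θ) = −Ψ(θ), and that the partial derivative ∂γ_c(θ)/∂c (at fixed θ) exists, is continuous, and is strictly positive for all θ ∈ [θ_s(c), 1). Then the jump deficiency Δγ(c) = γ_c(θ_s(c)) + η·c·θ_s(c) is differentiable with dΔγ/dc = (∂γ_c/∂c)(θ_s(c)) + η·θ_s(c) − (Ψ(θ_s(c))/γ_c(θ_s(c)))·θ_s′(c) > 0; in particular Δγ is strictly increasing on (c_max, 0). -/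

import Mathlib

set_option maxHeartbeats 2000000

/-- Strict monotonicity of the jump deficiency in the wave velocity: with `η > 0`,
`cmax < 0`, a C¹ strictly decreasing pyrolysis law `θs : (cmax,0) → (0,1)` (with
derivative `θs'` satisfying `θs' < 0`), a continuous nonnegative heat source `Ψ` on
`[0,1]` with `Ψ(1) = 0`, and for each `c ∈ (cmax,0)` a phase portrait `γ c` on
`[θs(c),1]` (continuous, vanishing at `1`, positive and C¹ on `[θs(c),1)` with
derivative `γθ c`, solving `γ·γ′ + η·c·γ = −Ψ`), such that the partial derivative
`dγ c θ = ∂γ/∂c` at fixed `θ` exists, is (jointly) continuous and strictly positive,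
the jump deficiency `Δγ(c) = γ c (θs c) + η·c·θs(c)` is differentiable with positive
derivative `dγ c (θs c) + η·θs(c) − (Ψ(θs c)/γ c (θs c))·θs'(c)`, and in particular
is strictly increasing on `(cmax,0)`. -/
theorem jump_deficiency_strictly_monotone
    (η cmax : ℝ) (hη : 0 < η) (hcmax : cmax < 0)
    (θs θs' : ℝ → ℝ)
    (hθsderiv : ∀ c ∈ Set.Ioo cmax 0, HasDerivAt θs (θs' c) c)
    (hθs'cont : ContinuousOn θs' (Set.Ioo cmax 0))
    (hθs'neg : ∀ c ∈ Set.Ioo cmax 0, θs' c < 0)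
    (hθsrange : ∀ c ∈ Set.Ioo cmax 0, θs c ∈ Set.Ioo (0:ℝ) 1)
    (Ψ : ℝ → ℝ)
    (hΨcont : ContinuousOn Ψ (Set.Icc 0 1))
    (hΨnonneg : ∀ θ ∈ Set.Icc (0:ℝ) 1, 0 ≤ Ψ θ)
    (hΨ1 : Ψ 1 = 0)
    (γ γθ dγ : ℝ → ℝ → ℝ)
    (hγcont : ∀ c ∈ Set.Ioo cmax 0, ContinuousOn (γ c) (Set.Icc (θs c) 1))
    (hγ1 : ∀ c ∈ Set.Ioo cmax 0, γ c 1 = 0)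
    (hγpos : ∀ c ∈ Set.Ioo cmax 0, ∀ θ ∈ Set.Ico (θs c) 1, 0 < γ c θ)
    (hγderiv : ∀ c ∈ Set.Ioo cmax 0, ∀ θ ∈ Set.Ico (θs c) 1,
      HasDerivWithinAt (γ c) (γθ c θ) (Set.Ici (θs c)) θ)
    (hode : ∀ c ∈ Set.Ioo cmax 0, ∀ θ ∈ Set.Ico (θs c) 1,
      γ c θ * γθ c θ + η * c * γ c θ = -Ψ θ)
    (hdγ : ∀ c ∈ Set.Ioo cmax 0, ∀ θ ∈ Set.Ico (θs c) 1,
      HasDerivAt (fun k => γ k θ) (dγ c θ) c)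
    (hdγcont : ContinuousOn (fun p : ℝ × ℝ => dγ p.1 p.2)
      {p : ℝ × ℝ | p.1 ∈ Set.Ioo cmax 0 ∧ p.2 ∈ Set.Ico (θs p.1) 1})
    (hdγpos : ∀ c ∈ Set.Ioo cmax 0, ∀ θ ∈ Set.Ico (θs c) 1, 0 < dγ c θ) :
    (∀ c ∈ Set.Ioo cmax 0,
      HasDerivAt (fun k => γ k (θs k) + η * k * θs k)
        (dγ c (θs c) + η * θs c - Ψ (θs c) / γ c (θs c) * θs' c) c ∧
      0 < dγ c (θs c) + η * θs c - Ψ (θs c) / γ c (θs c) * θs' c) ∧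
    StrictMonoOn (fun c => γ c (θs c) + η * c * θs c) (Set.Ioo cmax 0) := by
  -- θs is strictly antitone on (cmax, 0)
  have hanti : StrictAntiOn θs (Set.Ioo cmax 0) := by
    apply strictAntiOn_of_hasDerivWithinAt_neg (f' := θs') (convex_Ioo _ _)
      (fun x hx => ((hθsderiv x hx).continuousAt).continuousWithinAt)
    · rw [interior_Ioo]
      exact fun x hx => (hθsderiv x hx).hasDerivWithinAt
    · rw [interior_Ioo]
      exact hθs'neg
  -- γθ from the ODE
  have hγθ_eq : ∀ k ∈ Set.Ioo cmax 0, ∀ t ∈ Set.Ico (θs k) 1,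
      γθ k t = -(Ψ t / γ k t) - η * k := by
    intro k hk t ht
    have h := hode k hk t ht
    have hp : (0:ℝ) < γ k t := hγpos k hk t ht
    field_simp
    linarith [h]
  have hγθ_le : ∀ k ∈ Set.Ioo cmax 0, ∀ t ∈ Set.Ico (θs k) 1, γθ k t ≤ η * (-k) := by
    intro k hk t ht
    rw [hγθ_eq k hk t ht]
    have h1 : 0 ≤ Ψ t :=
      hΨnonneg t ⟨le_of_lt (lt_of_lt_of_le (hθsrange k hk).1 ht.1), le_of_lt ht.2⟩
    have h2 : (0:ℝ) < γ k t := hγpos k hk t ht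
    have h3 : 0 ≤ Ψ t / γ k t := div_nonneg h1 h2.le
    linarith
  -- the key derivative computation
  have key : ∀ c ∈ Set.Ioo cmax 0,
      HasDerivAt (fun k => γ k (θs k) + η * k * θs k)
        (dγ c (θs c) + η * θs c - Ψ (θs c) / γ c (θs c) * θs' c) c := by
    intro c hc
    have hy : θs c ∈ Set.Ioo (0:ℝ) 1 := hθsrange c hc
    have hyIco : θs c ∈ Set.Ico (θs c) 1 := ⟨le_rfl, hy.2⟩
    have hg0 : (0:ℝ) < γ c (θs c) := hγpos c hc _ hyIco
    have hcS : (c, θs c) ∈ {p : ℝ × ℝ | p.1 ∈ Set.Ioo cmax 0 ∧ p.2 ∈ Set.Ico (θs p.1) 1} :=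
      ⟨hc, hyIco⟩
    have hγθc : γθ c (θs c) = -(Ψ (θs c) / γ c (θs c)) - η * c := hγθ_eq c hc _ hyIco
    -- left part: k ↦ γ k (θs k) - γ c (θs k), derivative dγ c (θs c) within Iic c
    have Uleft : HasDerivWithinAt (fun k => γ k (θs k) - γ c (θs k)) (dγ c (θs c))
        (Set.Iic c) c := by
      rw [hasDerivWithinAt_iff_isLittleO, Asymptotics.isLittleO_iff]
      intro ε hε
      obtain ⟨δ₁, hδ₁, hball⟩ :=
        Metric.continuousWithinAt_iff.mp (hdγcont _ hcS) ε hε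
      obtain ⟨δ₂, hδ₂, hθδ⟩ :=
        Metric.continuousAt_iff.mp (hθsderiv c hc).continuousAt δ₁ hδ₁
      have hδpos : 0 < min δ₂ (min δ₁ (c - cmax)) :=
        lt_min hδ₂ (lt_min hδ₁ (by linarith [hc.1]))
      filter_upwards [nhdsWithin_le_nhds (Metric.ball_mem_nhds c hδpos),
        self_mem_nhdsWithin] with k hkball hkIic
      have hkc : |k - c| < min δ₂ (min δ₁ (c - cmax)) := by
        rw [← Real.dist_eq]; exact Metric.mem_ball.mp hkball
      rw [Real.norm_eq_abs, Real.norm_eq_abs, smul_eq_mul]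
      rcases eq_or_lt_of_le (Set.mem_Iic.mp hkIic) with rfl | hlt
      · simp
      · have hkmem : k ∈ Set.Ioo cmax 0 := by
          constructor
          · have h1 : c - k ≤ |k - c| := by rw [abs_sub_comm]; exact le_abs_self _
            have h2 : |k - c| < c - cmax :=
              lt_of_lt_of_le hkc (le_trans (min_le_right _ _) (min_le_right _ _))
            linarith
          · exact lt_trans hlt hc.2
        have hθsk1 : θs k < 1 := (hθsrange k hkmem).2
        have hIccmem : ∀ m ∈ Set.Icc k c, m ∈ Set.Ioo cmax 0 :=
          fun m hm => ⟨lt_of_lt_of_le hkmem.1 hm.1, lt_of_le_of_lt hm.2 hc.2⟩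
        have hθm : ∀ m ∈ Set.Icc k c, θs m ≤ θs k := by
          intro m hm
          rcases eq_or_lt_of_le hm.1 with rfl | h
          · exact le_rfl
          · exact (hanti hkmem (hIccmem m hm) h).le
        obtain ⟨ξ, hξ, hslope⟩ := exists_hasDerivAt_eq_slope (fun m => γ m (θs k))
          (fun m => dγ m (θs k)) hlt
          (fun m hm =>
            ((hdγ m (hIccmem m hm) (θs k) ⟨hθm m hm, hθsk1⟩).continuousAt).continuousWithinAt)
          (fun m hm => hdγ m (hIccmem m ⟨hm.1.le, hm.2.le⟩) (θs k)
            ⟨hθm m ⟨hm.1.le, hm.2.le⟩, hθsk1⟩)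
        rw [eq_div_iff (sub_ne_zero.mpr hlt.ne')] at hslope
        have hexpr : γ k (θs k) - γ c (θs k) - (γ c (θs c) - γ c (θs c)) -
            (k - c) * dγ c (θs c) = (dγ ξ (θs k) - dγ c (θs c)) * (k - c) := by
          linear_combination hslope
        rw [hexpr, abs_mul]
        have hξmem : ξ ∈ Set.Ioo cmax 0 := hIccmem ξ ⟨hξ.1.le, hξ.2.le⟩
        have hp : (ξ, θs k) ∈ {p : ℝ × ℝ | p.1 ∈ Set.Ioo cmax 0 ∧ p.2 ∈ Set.Ico (θs p.1) 1} :=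
          ⟨hξmem, ⟨hθm ξ ⟨hξ.1.le, hξ.2.le⟩, hθsk1⟩⟩
        have hdist : dist (ξ, θs k) (c, θs c) < δ₁ := by
          rw [Prod.dist_eq]
          apply max_lt
          · rw [Real.dist_eq, abs_of_neg (by linarith [hξ.2] : ξ - c < 0)]
            have h1 : c - k ≤ |k - c| := by rw [abs_sub_comm]; exact le_abs_self _
            have h2 : |k - c| < δ₁ :=
              lt_of_lt_of_le hkc (le_trans (min_le_right _ _) (min_le_left _ _))
            linarith [hξ.1]
          · apply hθδ
            rw [Real.dist_eq]
            exact lt_of_lt_of_le hkc (min_le_left _ _)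
        have hεb : |dγ ξ (θs k) - dγ c (θs c)| ≤ ε := by
          have := hball hp hdist
          rw [Real.dist_eq] at this
          exact this.le
        exact mul_le_mul_of_nonneg_right hεb (abs_nonneg _)
    -- left part: k ↦ γ c (θs k)
    have Vleft : HasDerivWithinAt (fun k => γ c (θs k)) (γθ c (θs c) * θs' c)
        (Set.Iic c) c := by
      have hmaps : Set.MapsTo θs (Set.Iic c ∩ Set.Ioo cmax 0) (Set.Ici (θs c)) := by
        rintro k ⟨hk1, hk2⟩
        rcases eq_or_lt_of_le (Set.mem_Iic.mp hk1) with rfl | hlt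
        · exact Set.self_mem_Ici
        · exact (hanti hk2 hc hlt).le
      have h := (hγderiv c hc (θs c) hyIco).comp c
        ((hθsderiv c hc).hasDerivWithinAt) hmaps
      exact h.mono_of_mem_nhdsWithin (Filter.inter_mem self_mem_nhdsWithin
        (nhdsWithin_le_nhds (isOpen_Ioo.mem_nhds hc)))
    -- right part: k ↦ γ k (θs k) - γ k (θs c), derivative γθ c (θs c) * θs' c within Ici c
    have Wright : HasDerivWithinAt (fun k => γ k (θs k) - γ k (θs c)) (γθ c (θs c) * θs' c)
        (Set.Ici c) c := by
      rw [hasDerivWithinAt_iff_isLittleO, Asymptotics.isLittleO_iff]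
      intro ε hε
      have hΨy0 : 0 ≤ Ψ (θs c) := hΨnonneg _ ⟨hy.1.le, hy.2.le⟩
      set M := |θs' c| + 1 with hMdef
      have hM : (0:ℝ) < M := by rw [hMdef]; positivity
      set ε₁ := ε / (2 * M) with hε₁def
      have hε₁ : 0 < ε₁ := by rw [hε₁def, hMdef]; positivity
      set ε₂ := ε / (2 * (|γθ c (θs c)| + 1)) with hε₂def
      have hε₂ : 0 < ε₂ := by rw [hε₂def]; positivity
      -- bound B on dγ near (c, θs c)
      obtain ⟨δB, hδB, hBball⟩ := Metric.continuousWithinAt_iff.mp (hdγcont _ hcS) 1 one_pos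
      set B := |dγ c (θs c)| + 1 with hBdef
      have hB : 0 < B := by rw [hBdef]; positivity
      have hBbound : ∀ q : ℝ × ℝ,
          q ∈ {p : ℝ × ℝ | p.1 ∈ Set.Ioo cmax 0 ∧ p.2 ∈ Set.Ico (θs p.1) 1} →
          dist q (c, θs c) < δB → |dγ q.1 q.2| ≤ B := by
        intro q hq hd
        have h1 := hBball hq hd
        rw [Real.dist_eq] at h1
        have h2 := abs_sub_abs_le_abs_sub (dγ q.1 q.2) (dγ c (θs c))
        rw [hBdef]; linarith
      -- ρ controlling the quotient
      set ρ := min (γ c (θs c) / 2)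
        (ε₁ * (γ c (θs c))^2 / (4 * (Ψ (θs c) + γ c (θs c) + 1))) with hρdef
      have hρpos : 0 < ρ := by
        rw [hρdef]
        apply lt_min (by positivity)
        have h4 : (0:ℝ) < 4 * (Ψ (θs c) + γ c (θs c) + 1) := by linarith
        positivity
      have hρ1 : ρ ≤ γ c (θs c) / 2 := min_le_left _ _
      have hρ2 : ρ ≤ ε₁ * (γ c (θs c))^2 / (4 * (Ψ (θs c) + γ c (θs c) + 1)) :=
        min_le_right _ _
      have hquot : ∀ a b : ℝ, 0 ≤ a → |a - Ψ (θs c)| ≤ ρ → |b - γ c (θs c)| ≤ ρ →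
          |a / b - Ψ (θs c) / γ c (θs c)| ≤ ε₁ / 2 := by
        intro a b ha hab hbb
        have hb2 : γ c (θs c) / 2 ≤ b := by
          have := abs_le.mp hbb; linarith
        have hbpos : 0 < b := by linarith
        rw [div_sub_div _ _ hbpos.ne' hg0.ne', abs_div,
          abs_of_pos (mul_pos hbpos hg0), div_le_iff₀ (mul_pos hbpos hg0)]
        have h1 : |a * γ c (θs c) - Ψ (θs c) * b| ≤ ρ * (γ c (θs c) + Ψ (θs c)) := by
          have he : a * γ c (θs c) - Ψ (θs c) * b
              = (a - Ψ (θs c)) * γ c (θs c) + Ψ (θs c) * (γ c (θs c) - b) := by ring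
          rw [he]
          calc |(a - Ψ (θs c)) * γ c (θs c) + Ψ (θs c) * (γ c (θs c) - b)|
              ≤ |(a - Ψ (θs c)) * γ c (θs c)| + |Ψ (θs c) * (γ c (θs c) - b)| :=
                abs_add_le _ _
            _ = |a - Ψ (θs c)| * γ c (θs c) + Ψ (θs c) * |γ c (θs c) - b| := by
                rw [abs_mul, abs_mul, abs_of_pos hg0, abs_of_nonneg hΨy0]
            _ ≤ ρ * γ c (θs c) + Ψ (θs c) * ρ := by
                have hbb' : |γ c (θs c) - b| ≤ ρ := by rwa [abs_sub_comm]
                have := mul_le_mul_of_nonneg_right hab hg0.le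
                have := mul_le_mul_of_nonneg_left hbb' hΨy0
                linarith
            _ = ρ * (γ c (θs c) + Ψ (θs c)) := by ring
        have hρε : ρ * (4 * (Ψ (θs c) + γ c (θs c) + 1)) ≤ ε₁ * (γ c (θs c))^2 := by
          have hY : (0:ℝ) < 4 * (Ψ (θs c) + γ c (θs c) + 1) := by linarith
          calc ρ * (4 * (Ψ (θs c) + γ c (θs c) + 1))
              ≤ (ε₁ * (γ c (θs c))^2 / (4 * (Ψ (θs c) + γ c (θs c) + 1))) *
                (4 * (Ψ (θs c) + γ c (θs c) + 1)) :=
                mul_le_mul_of_nonneg_right hρ2 hY.le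
            _ = ε₁ * (γ c (θs c))^2 := by field_simp
        have hcomm : a * γ c (θs c) - b * Ψ (θs c)
            = a * γ c (θs c) - Ψ (θs c) * b := by ring
        rw [hcomm]
        calc |a * γ c (θs c) - Ψ (θs c) * b| ≤ ρ * (γ c (θs c) + Ψ (θs c)) := h1
          _ ≤ ε₁ * (γ c (θs c))^2 / 4 := by linarith [hρε, hρpos.le]
          _ ≤ ε₁ / 2 * (b * γ c (θs c)) := by
              have hh : 0 ≤ ε₁ * γ c (θs c) * (b - γ c (θs c) / 2) :=
                mul_nonneg (mul_nonneg hε₁.le hg0.le) (by linarith)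
              nlinarith [hh]
      -- continuity of Ψ at θs c
      have hΨat : ContinuousAt Ψ (θs c) := hΨcont.continuousAt (Icc_mem_nhds hy.1 hy.2)
      obtain ⟨δΨ, hδΨ, hΨδ⟩ := Metric.continuousAt_iff.mp hΨat ρ hρpos
      set L := η * (-c) with hLdef
      have hLpos : 0 < L := by
        rw [hLdef]; exact mul_pos hη (by linarith [hc.2])
      set K := 2 * (Ψ (θs c) + ρ) / γ c (θs c) + η * (-cmax) with hKdef
      have hKpos : 0 < K := by
        rw [hKdef]
        have h1 : 0 < 2 * (Ψ (θs c) + ρ) / γ c (θs c) :=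
          div_pos (by linarith) hg0
        have h2 : 0 < η * (-cmax) := mul_pos hη (by linarith)
        linarith
      -- θs little-o facts
      have hθlo := hasDerivAt_iff_isLittleO.mp (hθsderiv c hc)
      have hE1 : ∀ᶠ k in nhds c, |θs k - θs c - (k - c) * θs' c| ≤ 1 * |k - c| := by
        have h := Asymptotics.isLittleO_iff.mp hθlo one_pos
        simpa [Real.norm_eq_abs, smul_eq_mul] using h
      have hE2 : ∀ᶠ k in nhds c, |θs k - θs c - (k - c) * θs' c| ≤ ε₂ * |k - c| := by
        have h := Asymptotics.isLittleO_iff.mp hθlo hε₂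
        simpa [Real.norm_eq_abs, smul_eq_mul] using h
      set δ := min δB (min (δΨ / M) (min (γ c (θs c) / (2 * (B + L * M + 1)))
        (min (ρ / (K * M + B + 1)) (min (ε₁ / (2 * η)) (-c))))) with hδdef
      have hδpos : 0 < δ := by
        rw [hδdef]
        have hLM := mul_pos hLpos hM
        have hKM := mul_pos hKpos hM
        refine lt_min hδB (lt_min (by positivity) (lt_min ?_ (lt_min ?_
          (lt_min (by positivity) (by linarith [hc.2])))))
        · have h0 : (0:ℝ) < 2 * (B + L * M + 1) := by linarith
          positivity
        · have h0 : (0:ℝ) < K * M + B + 1 := by linarith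
          positivity
      have hδ1 : δ ≤ δB := min_le_left _ _
      have hδ2 : δ ≤ δΨ / M := le_trans (min_le_right _ _) (min_le_left _ _)
      have hδ3 : δ ≤ γ c (θs c) / (2 * (B + L * M + 1)) :=
        le_trans (min_le_right _ _) (le_trans (min_le_right _ _) (min_le_left _ _))
      have hδ4 : δ ≤ ρ / (K * M + B + 1) :=
        le_trans (min_le_right _ _) (le_trans (min_le_right _ _)
          (le_trans (min_le_right _ _) (min_le_left _ _)))
      have hδ5 : δ ≤ ε₁ / (2 * η) :=
        le_trans (min_le_right _ _) (le_trans (min_le_right _ _)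
          (le_trans (min_le_right _ _) (le_trans (min_le_right _ _) (min_le_left _ _))))
      have hδ6 : δ ≤ -c :=
        le_trans (min_le_right _ _) (le_trans (min_le_right _ _)
          (le_trans (min_le_right _ _) (le_trans (min_le_right _ _) (min_le_right _ _))))
      filter_upwards [nhdsWithin_le_nhds (Metric.ball_mem_nhds c hδpos),
        self_mem_nhdsWithin, nhdsWithin_le_nhds hE1, nhdsWithin_le_nhds hE2]
        with k hkball hkIci hk1 hk2
      rw [Real.norm_eq_abs, Real.norm_eq_abs, smul_eq_mul]
      rcases eq_or_lt_of_le (Set.mem_Ici.mp hkIci) with rfl | hck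
      · simp
      · have hkc : |k - c| < δ := by
          rw [← Real.dist_eq]; exact Metric.mem_ball.mp hkball
        have hkcpos : 0 < k - c := sub_pos.mpr hck
        have habs : |k - c| = k - c := abs_of_pos hkcpos
        have hkcδ : k - c < δ := by rwa [habs] at hkc
        have hk0 : k < 0 := by linarith [le_trans hkcδ.le hδ6]
        have hkmem : k ∈ Set.Ioo cmax 0 := ⟨lt_trans hc.1 hck, hk0⟩
        have hθk : θs k < θs c := hanti hc hkmem hck
        have hθk0 : 0 < θs k := (hθsrange k hkmem).1
        -- |θs k - θs c| bound
        have hT : θs c - θs k ≤ M * (k - c) := by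
          rw [habs] at hk1
          have h1 := abs_le.mp hk1
          have h2 := neg_abs_le (θs' c)
          rw [hMdef]
          have h3 := mul_le_mul_of_nonneg_left (neg_abs_le (θs' c)) hkcpos.le
          linarith [h1.1, h3]
        -- (i)  |γ k (θs c) - γ c (θs c)| ≤ B (k - c)
        have hIccmem : ∀ m ∈ Set.Icc c k, m ∈ Set.Ioo cmax 0 :=
          fun m hm => ⟨lt_of_lt_of_le hc.1 hm.1, lt_of_le_of_lt hm.2 hk0⟩
        have hθm : ∀ m ∈ Set.Icc c k, θs m ≤ θs c := by
          intro m hm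
          rcases eq_or_lt_of_le hm.1 with rfl | h
          · exact le_rfl
          · exact (hanti hc (hIccmem m hm) h).le
        obtain ⟨ξ₀, hξ₀, hs₀⟩ := exists_hasDerivAt_eq_slope (fun m => γ m (θs c))
          (fun m => dγ m (θs c)) hck
          (fun m hm =>
            ((hdγ m (hIccmem m hm) (θs c) ⟨hθm m hm, hy.2⟩).continuousAt).continuousWithinAt)
          (fun m hm => hdγ m (hIccmem m ⟨hm.1.le, hm.2.le⟩) (θs c)
            ⟨hθm m ⟨hm.1.le, hm.2.le⟩, hy.2⟩)
        rw [eq_div_iff (sub_ne_zero.mpr hck.ne')] at hs₀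
        have hξ₀mem : ξ₀ ∈ Set.Ioo cmax 0 := hIccmem ξ₀ ⟨hξ₀.1.le, hξ₀.2.le⟩
        have hξ₀b : |dγ ξ₀ (θs c)| ≤ B := by
          apply hBbound (ξ₀, θs c) ⟨hξ₀mem, ⟨hθm ξ₀ ⟨hξ₀.1.le, hξ₀.2.le⟩, hy.2⟩⟩
          rw [Prod.dist_eq]
          apply max_lt
          · rw [Real.dist_eq, abs_of_pos (sub_pos.mpr hξ₀.1)]
            calc ξ₀ - c < k - c := by linarith [hξ₀.2]
              _ < δ := hkcδ
              _ ≤ δB := hδ1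
          · simpa [Real.dist_eq] using hδB
        have hgky : |γ k (θs c) - γ c (θs c)| ≤ B * (k - c) := by
          rw [← hs₀, abs_mul, abs_of_pos hkcpos]
          exact mul_le_mul_of_nonneg_right hξ₀b hkcpos.le
        -- (ii) lower bound for γ k on [θs k, θs c]
        have hlow : ∀ t ∈ Set.Icc (θs k) (θs c), γ c (θs c) / 2 ≤ γ k t := by
          intro t ht
          have hstep : γ k (θs c) - γ k t ≤ L * (θs c - t) := by
            rcases eq_or_lt_of_le ht.2 with heq | hty
            · rw [heq]; simp [mul_nonneg hLpos.le (sub_nonneg.mpr ht.2)]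
            · obtain ⟨ξ₁, hξ₁, hs₁⟩ := exists_hasDerivAt_eq_slope (γ k) (γθ k) hty
                ((hγcont k hkmem).mono (Set.Icc_subset_Icc ht.1 hy.2.le))
                (fun s hs => (hγderiv k hkmem s
                  ⟨le_trans ht.1 hs.1.le, lt_trans hs.2 hy.2⟩).hasDerivAt
                  (Ici_mem_nhds (lt_of_le_of_lt ht.1 hs.1)))
              rw [eq_div_iff (sub_ne_zero.mpr hty.ne')] at hs₁
              have hb := hγθ_le k hkmem ξ₁ ⟨le_trans ht.1 hξ₁.1.le, lt_trans hξ₁.2 hy.2⟩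
              have hLb : η * (-k) ≤ L := by
                rw [hLdef]
                exact mul_le_mul_of_nonneg_left (by linarith : -k ≤ -c) hη.le
              have h8 := mul_le_mul_of_nonneg_right (le_trans hb hLb)
                (by linarith : (0:ℝ) ≤ θs c - t)
              linarith [h8]
          have h1 : γ c (θs c) - B * (k - c) ≤ γ k (θs c) := by
            have := abs_le.mp hgky; linarith
          have h2 : θs c - t ≤ M * (k - c) :=
            le_trans (by linarith [ht.1] : θs c - t ≤ θs c - θs k) hT
          have h4 : (k - c) * (2 * (B + L * M + 1)) ≤ γ c (θs c) := by
            have h3 : k - c ≤ γ c (θs c) / (2 * (B + L * M + 1)) :=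
              le_trans hkcδ.le hδ3
            have hLM := mul_pos hLpos hM
            have hpos : (0:ℝ) < 2 * (B + L * M + 1) := by linarith
            exact (le_div_iff₀ hpos).mp h3
          linarith [hstep, h1, h4, mul_le_mul_of_nonneg_left h2 hLpos.le, hkcpos]
        -- MVT for the increment in θ
        obtain ⟨ζ, hζ, hsζ⟩ := exists_hasDerivAt_eq_slope (γ k) (γθ k) hθk
          ((hγcont k hkmem).mono (Set.Icc_subset_Icc le_rfl hy.2.le))
          (fun s hs => (hγderiv k hkmem s ⟨hs.1.le, lt_trans hs.2 hy.2⟩).hasDerivAt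
            (Ici_mem_nhds hs.1))
        rw [eq_div_iff (sub_ne_zero.mpr hθk.ne')] at hsζ
        have hζIco : ζ ∈ Set.Ico (θs k) 1 := ⟨hζ.1.le, lt_trans hζ.2 hy.2⟩
        have hMkδΨ : M * (k - c) < δΨ := by
          calc M * (k - c) < M * δ := mul_lt_mul_of_pos_left hkcδ hM
            _ ≤ M * (δΨ / M) := mul_le_mul_of_nonneg_left hδ2 hM.le
            _ = δΨ := by field_simp
        -- (iii) |γ k ζ - γ k (θs c)| ≤ K (θs c - ζ)
        have hKbound : |γ k ζ - γ k (θs c)| ≤ K * (θs c - ζ) := by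
          obtain ⟨ξ₂, hξ₂, hs₂⟩ := exists_hasDerivAt_eq_slope (γ k) (γθ k) hζ.2
            ((hγcont k hkmem).mono (Set.Icc_subset_Icc hζ.1.le hy.2.le))
            (fun s hs => (hγderiv k hkmem s
              ⟨le_trans hζ.1.le hs.1.le, lt_trans hs.2 hy.2⟩).hasDerivAt
              (Ici_mem_nhds (lt_trans hζ.1 hs.1)))
          rw [eq_div_iff (sub_ne_zero.mpr hζ.2.ne')] at hs₂
          have hξ₂Ico : ξ₂ ∈ Set.Ico (θs k) 1 :=
            ⟨(lt_trans hζ.1 hξ₂.1).le, lt_trans hξ₂.2 hy.2⟩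
          have hγθξ₂ := hγθ_eq k hkmem ξ₂ hξ₂Ico
          have hγξ₂low : γ c (θs c) / 2 ≤ γ k ξ₂ := hlow ξ₂ ⟨hξ₂Ico.1, hξ₂.2.le⟩
          have hΨξ₂ : |Ψ ξ₂ - Ψ (θs c)| ≤ ρ := by
            have hd : dist ξ₂ (θs c) < δΨ := by
              rw [Real.dist_eq, abs_sub_comm, abs_of_pos (sub_pos.mpr hξ₂.2)]
              have h5 : θs c - ξ₂ ≤ M * (k - c) :=
                le_trans (by linarith [hζ.1, hξ₂.1] : θs c - ξ₂ ≤ θs c - θs k) hT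
              linarith
            have := hΨδ hd
            rw [Real.dist_eq] at this
            exact this.le
          have hΨξ₂0 : 0 ≤ Ψ ξ₂ :=
            hΨnonneg _ ⟨by linarith [hθk0, hζ.1, hξ₂.1], (lt_trans hξ₂.2 hy.2).le⟩
          have hγθabs : |γθ k ξ₂| ≤ K := by
            rw [hγθξ₂, hKdef, abs_le]
            have hγξ₂pos : 0 < γ k ξ₂ := by linarith
            have hfrac : Ψ ξ₂ / γ k ξ₂ ≤ 2 * (Ψ (θs c) + ρ) / γ c (θs c) := by
              rw [div_le_div_iff₀ hγξ₂pos hg0]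
              have h6 := abs_le.mp hΨξ₂
              have h7 := mul_le_mul_of_nonneg_right (by linarith [h6.2] :
                Ψ ξ₂ ≤ Ψ (θs c) + ρ) hg0.le
              have h8 := mul_le_mul_of_nonneg_left hγξ₂low
                (by linarith : (0:ℝ) ≤ 2 * (Ψ (θs c) + ρ))
              linarith [h7, h8]
            have hfrac0 : 0 ≤ Ψ ξ₂ / γ k ξ₂ := div_nonneg hΨξ₂0 hγξ₂pos.le
            have hfrac0' : 0 ≤ 2 * (Ψ (θs c) + ρ) / γ c (θs c) :=
              div_nonneg (by linarith) hg0.le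
            have hηk1 : 0 ≤ η * (-k) := mul_nonneg hη.le (by linarith)
            have hηk2 : η * (-k) ≤ η * (-cmax) :=
              mul_le_mul_of_nonneg_left (by linarith [hkmem.1]) hη.le
            constructor
            · linarith [hfrac, hηk1, hηk2, hfrac0']
            · linarith [hfrac0, hηk2, hfrac0']
          have he : γ k ζ - γ k (θs c) = -(γθ k ξ₂ * (θs c - ζ)) := by linarith [hs₂]
          rw [he, abs_neg, abs_mul, abs_of_pos (sub_pos.mpr hζ.2)]
          exact mul_le_mul_of_nonneg_right hγθabs (sub_pos.mpr hζ.2).le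
        -- |γ k ζ - γ c (θs c)| ≤ ρ
        have hγζρ : |γ k ζ - γ c (θs c)| ≤ ρ := by
          have h5 : θs c - ζ ≤ M * (k - c) :=
            le_trans (by linarith [hζ.1] : θs c - ζ ≤ θs c - θs k) hT
          have h6 : (k - c) * (K * M + B + 1) ≤ ρ := by
            have h7 : k - c ≤ ρ / (K * M + B + 1) := le_trans hkcδ.le hδ4
            have hKM := mul_pos hKpos hM
            have hpos : (0:ℝ) < K * M + B + 1 := by linarith
            exact (le_div_iff₀ hpos).mp h7
          calc |γ k ζ - γ c (θs c)|
              ≤ |γ k ζ - γ k (θs c)| + |γ k (θs c) - γ c (θs c)| := abs_sub_le _ _ _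
            _ ≤ K * (θs c - ζ) + B * (k - c) := add_le_add hKbound hgky
            _ ≤ K * (M * (k - c)) + B * (k - c) := by
                linarith [mul_le_mul_of_nonneg_left h5 hKpos.le]
            _ ≤ ρ := by linarith [h6, hkcpos]
        -- |Ψ ζ - Ψ (θs c)| ≤ ρ
        have hΨζρ : |Ψ ζ - Ψ (θs c)| ≤ ρ := by
          have hd : dist ζ (θs c) < δΨ := by
            rw [Real.dist_eq, abs_sub_comm, abs_of_pos (sub_pos.mpr hζ.2)]
            have h5 : θs c - ζ ≤ M * (k - c) :=
              le_trans (by linarith [hζ.1] : θs c - ζ ≤ θs c - θs k) hT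
            linarith
          have := hΨδ hd
          rw [Real.dist_eq] at this
          exact this.le
        have hγθζ := hγθ_eq k hkmem ζ hζIco
        have hΨζ0 : 0 ≤ Ψ ζ := hΨnonneg _ ⟨by linarith [hθk0, hζ.1], hζIco.2.le⟩
        have hqb : |Ψ ζ / γ k ζ - Ψ (θs c) / γ c (θs c)| ≤ ε₁ / 2 :=
          hquot _ _ hΨζ0 hΨζρ hγζρ
        have hγθdiff : |γθ k ζ - γθ c (θs c)| ≤ ε₁ := by
          rw [hγθζ, hγθc]
          have hηkc : |η * k - η * c| ≤ ε₁ / 2 := by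
            have he : η * k - η * c = η * (k - c) := by ring
            rw [he, abs_of_pos (mul_pos hη hkcpos)]
            calc η * (k - c) ≤ η * (ε₁ / (2 * η)) :=
                mul_le_mul_of_nonneg_left (le_trans hkcδ.le hδ5) hη.le
              _ = ε₁ / 2 := by field_simp
          have he : (-(Ψ ζ / γ k ζ) - η * k) - (-(Ψ (θs c) / γ c (θs c)) - η * c)
              = -((Ψ ζ / γ k ζ - Ψ (θs c) / γ c (θs c)) + (η * k - η * c)) := by ring
          rw [he, abs_neg]
          calc |(Ψ ζ / γ k ζ - Ψ (θs c) / γ c (θs c)) + (η * k - η * c)|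
              ≤ |Ψ ζ / γ k ζ - Ψ (θs c) / γ c (θs c)| + |η * k - η * c| := abs_add_le _ _
            _ ≤ ε₁ / 2 + ε₁ / 2 := add_le_add hqb hηkc
            _ = ε₁ := by ring
        -- final assembly
        have hdecomp : (γ k (θs k) - γ k (θs c)) - (γ c (θs c) - γ c (θs c)) -
            (k - c) * (γθ c (θs c) * θs' c)
            = (γθ k ζ - γθ c (θs c)) * (θs k - θs c) +
              γθ c (θs c) * ((θs k - θs c) - (k - c) * θs' c) := by
          linear_combination hsζ
        rw [hdecomp, habs]
        have hb1 : |(γθ k ζ - γθ c (θs c)) * (θs k - θs c)| ≤ ε₁ * (M * (k - c)) := by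
          rw [abs_mul]
          apply mul_le_mul hγθdiff ?_ (abs_nonneg _) hε₁.le
          rw [abs_sub_comm, abs_of_pos (sub_pos.mpr hθk)]
          exact hT
        have hb2 : |γθ c (θs c) * ((θs k - θs c) - (k - c) * θs' c)|
            ≤ |γθ c (θs c)| * (ε₂ * (k - c)) := by
          rw [abs_mul]
          apply mul_le_mul_of_nonneg_left ?_ (abs_nonneg _)
          rw [habs] at hk2
          exact hk2
        calc |(γθ k ζ - γθ c (θs c)) * (θs k - θs c) +
              γθ c (θs c) * ((θs k - θs c) - (k - c) * θs' c)|
            ≤ |(γθ k ζ - γθ c (θs c)) * (θs k - θs c)| +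
              |γθ c (θs c) * ((θs k - θs c) - (k - c) * θs' c)| := abs_add_le _ _
          _ ≤ ε₁ * (M * (k - c)) + |γθ c (θs c)| * (ε₂ * (k - c)) := add_le_add hb1 hb2
          _ ≤ ε * (k - c) := by
              have h1 : ε₁ * M = ε / 2 := by
                rw [hε₁def]; field_simp
              have h2 : |γθ c (θs c)| * ε₂ ≤ ε / 2 := by
                rw [hε₂def, mul_comm, div_mul_eq_mul_div,
                  div_le_div_iff₀ (by positivity) (by norm_num : (0:ℝ) < 2)]
                linarith only [hε.le, mul_nonneg hε.le (abs_nonneg (γθ c (θs c)))]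
              have h1' : ε₁ * (M * (k - c)) = ε / 2 * (k - c) := by
                rw [← mul_assoc, h1]
              have h2' : |γθ c (θs c)| * (ε₂ * (k - c)) ≤ ε / 2 * (k - c) := by
                rw [← mul_assoc]
                exact mul_le_mul_of_nonneg_right h2 hkcpos.le
              calc ε₁ * (M * (k - c)) + |γθ c (θs c)| * (ε₂ * (k - c))
                  ≤ ε / 2 * (k - c) + ε / 2 * (k - c) := add_le_add (le_of_eq h1') h2'
                _ = ε * (k - c) := by ring
    have Pright : HasDerivWithinAt (fun k => γ k (θs c)) (dγ c (θs c)) (Set.Ici c) c :=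
      (hdγ c hc _ hyIco).hasDerivWithinAt
    have hGleft : HasDerivWithinAt (fun k => γ k (θs k))
        (dγ c (θs c) + γθ c (θs c) * θs' c) (Set.Iic c) c := by
      have h := Uleft.add Vleft
      have hfun : (fun k => (γ k (θs k) - γ c (θs k)) + γ c (θs k))
          = fun k => γ k (θs k) := by funext k; ring
      simp only [Pi.add_def] at h; rwa [hfun] at h
    have hGright : HasDerivWithinAt (fun k => γ k (θs k))
        (dγ c (θs c) + γθ c (θs c) * θs' c) (Set.Ici c) c := by
      have h := Wright.add Pright
      have hfun : (fun k => (γ k (θs k) - γ k (θs c)) + γ k (θs c))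
          = fun k => γ k (θs k) := by funext k; ring
      simp only [Pi.add_def] at h; rwa [hfun, add_comm] at h
    have hG : HasDerivAt (fun k => γ k (θs k)) (dγ c (θs c) + γθ c (θs c) * θs' c) c := by
      have h := hGleft.union hGright
      rw [Set.Iic_union_Ici] at h
      exact hasDerivWithinAt_univ.mp h
    have hH : HasDerivAt (fun k => η * k * θs k) (η * θs c + η * c * θs' c) c := by
      have h1 : HasDerivAt (fun k => k * θs k) (1 * θs c + c * θs' c) c :=
        (hasDerivAt_id c).mul (hθsderiv c hc)
      have h2 := h1.const_mul η
      have hfun : (fun k => η * (k * θs k)) = fun k => η * k * θs k := by funext k; ring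
      have hval : η * (1 * θs c + c * θs' c) = η * θs c + η * c * θs' c := by ring
      rwa [hfun, hval] at h2
    have hsum := hG.add hH
    refine hsum.congr_deriv ?_
    rw [hγθc]
    ring
  refine ⟨fun c hc => ⟨key c hc, ?_⟩, ?_⟩
  · have hy : θs c ∈ Set.Ioo (0:ℝ) 1 := hθsrange c hc
    have hyIco : θs c ∈ Set.Ico (θs c) 1 := ⟨le_rfl, hy.2⟩
    have h1 : 0 < dγ c (θs c) := hdγpos c hc _ hyIco
    have h2 : 0 < η * θs c := mul_pos hη hy.1
    have h3 : Ψ (θs c) / γ c (θs c) * θs' c ≤ 0 :=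
      mul_nonpos_of_nonneg_of_nonpos
        (div_nonneg (hΨnonneg _ ⟨hy.1.le, hy.2.le⟩) (hγpos c hc _ hyIco).le)
        (hθs'neg c hc).le
    linarith
  · apply strictMonoOn_of_hasDerivWithinAt_pos
      (f' := fun x => dγ x (θs x) + η * θs x - Ψ (θs x) / γ x (θs x) * θs' x)
      (convex_Ioo _ _)
      (fun x hx => ((key x hx).continuousAt).continuousWithinAt)
    · rw [interior_Ioo]
      exact fun x hx => (key x hx).hasDerivWithinAt
    · rw [interior_Ioo]
      intro x hx
      have hy : θs x ∈ Set.Ioo (0:ℝ) 1 := hθsrange x hx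
      have hyIco : θs x ∈ Set.Ico (θs x) 1 := ⟨le_rfl, hy.2⟩
      have h1 : 0 < dγ x (θs x) := hdγpos x hx _ hyIco
      have h2 : 0 < η * θs x := mul_pos hη hy.1
      have h3 : Ψ (θs x) / γ x (θs x) * θs' x ≤ 0 :=
        mul_nonpos_of_nonneg_of_nonpos
          (div_nonneg (hΨnonneg _ ⟨hy.1.le, hy.2.le⟩) (hγpos x hx _ hyIco).le)
          (hθs'neg x hx).le
      linarith
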